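/- Let μ₁, μ₂ ∈ [R_min, R_max] with R_min ≤ R_max and V > 0. Then the squared Hellinger distance between N(μ₁, V) and N(μ₂, V) satisfies 2 − 2exp(−(μ₁−μ₂)²/(8V)) ≥ (μ₁ − μ₂)² / (2(R_max − R_min)² + 4V). -/

import Mathlib

theorem hellinger_sq_gaussian_lower_bound
    (Rmin Rmax μ₁ μ₂ V : ℝ) (hR : Rmin ≤ Rmax) (hV : 0 < V)
    (h₁ : μ₁ ∈ Set.Icc Rmin Rmax) (h₂ : μ₂ ∈ Set.Icc Rmin Rmax) :
    2 - 2 * Real.exp (-(μ₁ - μ₂) ^ 2 / (8 * V)) ≥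
      (μ₁ - μ₂) ^ 2 / (2 * (Rmax - Rmin) ^ 2 + 4 * V) := by
  obtain ⟨h1a, h1b⟩ := h₁
  obtain ⟨h2a, h2b⟩ := h₂
  set d := μ₁ - μ₂ with hd
  set R := Rmax - Rmin with hRdef
  have hd2 : d ^ 2 ≤ R ^ 2 := by
    have h1 : d ≤ R := by simp [hd, hRdef]; linarith
    have h2 : -R ≤ d := by simp [hd, hRdef]; linarith
    nlinarith
  set x := d ^ 2 / (8 * V) with hx
  have hx0 : 0 ≤ x := by positivity
  have h1x : (0:ℝ) < 1 + x := by linarith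
  have hexp : Real.exp (-d ^ 2 / (8 * V)) ≤ 1 / (1 + x) := by
    have h := Real.add_one_le_exp x
    have : Real.exp (-d ^ 2 / (8 * V)) = (Real.exp x)⁻¹ := by
      rw [← Real.exp_neg, hx]; ring_nf
    rw [this]
    rw [inv_le_iff_one_le_mul₀ (Real.exp_pos x)] at *
    rw [div_mul_eq_mul_div, le_div_iff₀ h1x]
    nlinarith [Real.exp_pos x]
  have hden : (0:ℝ) < 2 * R ^ 2 + 4 * V := by positivity
  have hxeq : x * (8 * V) = d ^ 2 := by rw [hx]; field_simp
  have key : d ^ 2 / (2 * R ^ 2 + 4 * V) ≤ 2 - 2 / (1 + x) := by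
    have h1 : d ^ 2 / (2 * R ^ 2 + 4 * V) ≤ 2 * x / (1 + x) := by
      rw [div_le_div_iff₀ hden h1x]
      nlinarith [sq_nonneg d]
    have h2 : 2 * x / (1 + x) = 2 - 2 / (1 + x) := by
      field_simp
      ring
    linarith [h1, h2.symm.le, h2.le]
  calc (μ₁ - μ₂) ^ 2 / (2 * (Rmax - Rmin) ^ 2 + 4 * V)
      = d ^ 2 / (2 * R ^ 2 + 4 * V) := rfl
    _ ≤ 2 - 2 / (1 + x) := key
    _ ≤ 2 - 2 * Real.exp (-d ^ 2 / (8 * V)) := by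
        have h3 : 2 * Real.exp (-d ^ 2 / (8 * V)) ≤ 2 * (1 / (1 + x)) := by linarith
        have h4 : 2 / (1 + x) = 2 * (1 / (1 + x)) := by ring
        linarith
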